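/- Let {(Q_i, S_i, μ_i) : i ∈ I} be a family of fuzzy skill functions whose merge (Q, S, μ) is a distributed fuzzy skill function, let (Q, 𝒦) be the knowledge structure delineated by (Q, S, μ), and for each i ∈ I let (Q_i, 𝒦_i) be the knowledge structure delineated by (Q_i, S_i, μ_i). If the family {S_i : i ∈ I} is pairwise disjoint, then: if every (Q_i, 𝒦_i) is discriminative, (Q, 𝒦) is discriminative; and if every (Q_i, 𝒦_i) is bi-discriminative, (Q, 𝒦) is bi-discriminative. -/
import Mathlib


/-- A fuzzy set on a set `S` of skills: a function `S → [0,1]`, ordered pointwise. -/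
abbrev FuzzySet (S : Type*) := S → unitInterval

/-- The problem function induced by a fuzzy skill multimap `μ`:
`p(F) = {q | ∃ C ∈ μ(q), C ⊆ F}`. -/
def pfun {Q S : Type*} (μ : Q → Set (FuzzySet S)) (F : FuzzySet S) : Set Q :=
  {q | ∃ C ∈ μ q, C ≤ F}

/-- The knowledge structure delineated by a fuzzy skill multimap `μ`. -/
def delineated {Q S : Type*} (μ : Q → Set (FuzzySet S)) : Set (Set Q) :=
  Set.range (pfun μ)

/-- `𝒦_q = {K ∈ 𝒦 | q ∈ K}`. -/
def Kq {Q : Type*} (𝒦 : Set (Set Q)) (q : Q) : Set (Set Q) := {K ∈ 𝒦 | q ∈ K}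

/-- A knowledge structure is discriminative if `𝒦_q ≠ 𝒦_r` for distinct `q, r`. -/
def Discriminative {Q : Type*} (𝒦 : Set (Set Q)) : Prop :=
  ∀ q r : Q, q ≠ r → Kq 𝒦 q ≠ Kq 𝒦 r

/-- A knowledge structure is bi-discriminative if `𝒦_q ⊄ 𝒦_r` and `𝒦_r ⊄ 𝒦_q`
for distinct `q, r`. -/
def BiDiscriminative {Q : Type*} (𝒦 : Set (Set Q)) : Prop :=
  ∀ q r : Q, q ≠ r → ¬ Kq 𝒦 q ⊆ Kq 𝒦 r ∧ ¬ Kq 𝒦 r ⊆ Kq 𝒦 q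

/-- `μ` is a fuzzy skill multimap: each `μ(q)` is a nonempty family of nonzero fuzzy sets. -/
def FSM {Q S : Type*} (μ : Q → Set (FuzzySet S)) : Prop :=
  ∀ q, (μ q).Nonempty ∧ ∀ C ∈ μ q, C ≠ 0

/-- A molecule: a fuzzy set with exactly one skill of nonzero membership. -/
def Molecule {S : Type*} (T : FuzzySet S) : Prop := ∃! s, T s ≠ 0

/-- A knowledge space: a knowledge structure closed under unions of arbitrary subfamilies. -/
def IsKSpace {Q : Type*} (𝒦 : Set (Set Q)) : Prop :=
  ∅ ∈ 𝒦 ∧ Set.univ ∈ 𝒦 ∧ ∀ 𝒮 ⊆ 𝒦, ⋃₀ 𝒮 ∈ 𝒦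

/-- For a family of fuzzy skill functions `(Q_i, S_i, μ_i)` whose merge
`(Q, S, μ)` is a distributed fuzzy skill function, if the skill domains `S_i` are
pairwise disjoint, then discriminativity (resp. bi-discriminativity) of every local
delineated structure implies that of the global delineated structure. -/
theorem stmt_18 {ι Q S : Type*} [Nonempty Q] [Nonempty S]
    (Qi : ι → Set Q) (Si : ι → Set S)
    (hQcover : ⋃ i, Qi i = Set.univ) (hScover : ⋃ i, Si i = Set.univ)
    (hQine : ∀ i, (Qi i).Nonempty) (hSine : ∀ i, (Si i).Nonempty)
    (μi : ι → Q → Set (FuzzySet S))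
    (hine : ∀ i, ∀ q ∈ Qi i, (μi i q).Nonempty)
    (hinz : ∀ i, ∀ q ∈ Qi i, ∀ C ∈ μi i q, C ≠ 0)
    (hvanish : ∀ i, ∀ q ∈ Qi i, ∀ C ∈ μi i q, ∀ s ∉ Si i, C s = 0)
    (hincomp : ∀ i, ∀ q ∈ Qi i, ∀ C ∈ μi i q, ∀ D ∈ μi i q, C ≤ D → C = D)
    (μ : Q → Set (FuzzySet S))
    (hμ : ∀ q, μ q = {C | ∃ i, q ∈ Qi i ∧ C ∈ μi i q})
    (hdistr : ∀ q, ∀ C ∈ μ q, ∀ D ∈ μ q, C ≤ D → C = D)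
    (Ki : ι → Set (Set Q))
    (hKi : ∀ i, Ki i = (fun F => {q ∈ Qi i | ∃ C ∈ μi i q, C ≤ F}) ''
      {F : FuzzySet S | ∀ s ∉ Si i, F s = 0})
    (hSdisj : ∀ i j, i ≠ j → Disjoint (Si i) (Si j)) :
    ((∀ i, ∀ q ∈ Qi i, ∀ r ∈ Qi i, q ≠ r → Kq (Ki i) q ≠ Kq (Ki i) r) →
      Discriminative (delineated μ)) ∧
    ((∀ i, ∀ q ∈ Qi i, ∀ r ∈ Qi i, q ≠ r →
        ¬ Kq (Ki i) q ⊆ Kq (Ki i) r ∧ ¬ Kq (Ki i) r ⊆ Kq (Ki i) q) →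
      BiDiscriminative (delineated μ)) := by

  classical
  have hzero : ∀ x : unitInterval, x ≤ 0 → x = 0 := fun x h => le_antisymm h unitInterval.nonneg'
  have hcov : ∀ q : Q, ∃ i, q ∈ Qi i := fun q =>
    Set.mem_iUnion.mp (hQcover.symm ▸ Set.mem_univ q)
  have lift : ∀ i (F : FuzzySet S), (∀ s ∉ Si i, F s = 0) →
      pfun μ F = {q ∈ Qi i | ∃ C ∈ μi i q, C ≤ F} := by
    intro i F hF
    ext q
    simp only [pfun, Set.mem_setOf_eq, hμ, Set.mem_sep_iff]
    constructor
    · rintro ⟨C, ⟨j, hqj, hCj⟩, hCF⟩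
      rcases eq_or_ne j i with rfl | hji
      · exact ⟨hqj, C, hCj, hCF⟩
      · exfalso
        apply hinz j q hqj C hCj
        funext s
        by_cases hs : s ∈ Si j
        · have hsi : s ∉ Si i := Set.disjoint_left.mp (hSdisj j i hji) hs
          have h2 := hCF s
          rw [hF s hsi] at h2
          exact hzero _ h2
        · exact hvanish j q hqj C hCj s hs
    · rintro ⟨hqi, C, hC, hCF⟩
      exact ⟨C, ⟨i, hqi, hC⟩, hCF⟩
  have liftK : ∀ i K, K ∈ Ki i → K ∈ delineated μ := by
    intro i K hK
    rw [hKi] at hK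
    obtain ⟨F, hF, rfl⟩ := hK
    exact ⟨F, lift i F hF⟩
  have sepQ : ∀ i q, q ∈ Qi i → ∀ r, r ∉ Qi i → ∃ K ∈ delineated μ, q ∈ K ∧ r ∉ K := by
    intro i q hq r hr
    set F : FuzzySet S := fun s => if s ∈ Si i then 1 else 0 with hFdef
    have hF : ∀ s ∉ Si i, F s = 0 := fun s hs => by simp [hFdef, hs]
    refine ⟨pfun μ F, ⟨F, rfl⟩, ?_, ?_⟩
    · rw [lift i F hF]
      obtain ⟨C, hC⟩ := hine i q hq
      refine ⟨hq, C, hC, fun s => ?_⟩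
      by_cases hs : s ∈ Si i
      · simp only [hFdef, if_pos hs]
        exact unitInterval.le_one'
      · rw [hvanish i q hq C hC s hs]
        exact unitInterval.nonneg'
    · rw [lift i F hF]
      rintro ⟨hrq, -⟩
      exact hr hrq
  have sepOf : ∀ q r : Q, (∃ i, q ∈ Qi i ∧ (r ∈ Qi i →
      ∃ K, K ∈ Kq (Ki i) q ∧ K ∉ Kq (Ki i) r)) →
      ∃ K ∈ delineated μ, q ∈ K ∧ r ∉ K := by
    rintro q r ⟨i, hq, h⟩
    by_cases hr : r ∈ Qi i
    · obtain ⟨K, ⟨hKmem, hqK⟩, hKr⟩ := h hr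
      exact ⟨K, liftK i K hKmem, hqK, fun hrK => hKr ⟨hKmem, hrK⟩⟩
    · exact sepQ i q hq r hr
  constructor
  · intro hloc q r hne
    by_cases hcommon : ∃ i, q ∈ Qi i ∧ r ∈ Qi i
    · obtain ⟨i, hq, hr⟩ := hcommon
      have hne' := hloc i q hq r hr hne
      by_cases hsub : Kq (Ki i) q ⊆ Kq (Ki i) r
      · have hnsub : ¬ Kq (Ki i) r ⊆ Kq (Ki i) q := fun h =>
          hne' (le_antisymm hsub h)
        obtain ⟨K, hK1, hK2⟩ := Set.not_subset.mp hnsub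
        obtain ⟨K', hK', hrK', hqK'⟩ := sepOf r q ⟨i, hr, fun _ => ⟨K, hK1, hK2⟩⟩
        intro h
        have hmem : K' ∈ Kq (delineated μ) r := ⟨hK', hrK'⟩
        rw [← h] at hmem
        exact hqK' hmem.2
      · obtain ⟨K, hK1, hK2⟩ := Set.not_subset.mp hsub
        obtain ⟨K', hK', hqK', hrK'⟩ := sepOf q r ⟨i, hq, fun _ => ⟨K, hK1, hK2⟩⟩
        intro h
        have hmem : K' ∈ Kq (delineated μ) q := ⟨hK', hqK'⟩
        rw [h] at hmem
        exact hrK' hmem.2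
    · obtain ⟨i, hq⟩ := hcov q
      have hr : r ∉ Qi i := fun hr => hcommon ⟨i, hq, hr⟩
      obtain ⟨K', hK', hqK', hrK'⟩ := sepOf q r ⟨i, hq, fun hr' => absurd hr' hr⟩
      intro h
      have hmem : K' ∈ Kq (delineated μ) q := ⟨hK', hqK'⟩
      rw [h] at hmem
      exact hrK' hmem.2
  · intro hloc q r hne
    have dir : ∀ a b : Q, a ≠ b → ¬ Kq (delineated μ) a ⊆ Kq (delineated μ) b := by
      intro a b hab
      obtain ⟨i, ha⟩ := hcov a
      obtain ⟨K, hK, haK, hbK⟩ := sepOf a b ⟨i, ha, fun hb =>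
        Set.not_subset.mp (hloc i a ha b hb hab).1⟩
      intro hsub
      exact hbK (hsub ⟨hK, haK⟩).2
    exact ⟨dir q r hne, dir r q hne.symm⟩
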